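/- Let X be a Banach space admitting a sequence of compact operators (K_n) on X with K_n x → x in norm for every x ∈ X and ‖Id_X − 2 K_n‖ → 1. Then for every x ∈ X and every weakly null sequence (x_n) in X one has limsup_n ‖x + x_n‖ = limsup_n ‖x − x_n‖ (property (wM)). -/

import Mathlib

open Filter Topology NormedSpace ENNReal MeasureTheory

noncomputable section

/-- A sequence in `X` is weakly null if it tends to zero in the weak topology,
i.e. `f (xs n) → 0` for every continuous linear functional `f`. -/
def WeaklyNull {X : Type*} [NormedAddCommGroup X] [NormedSpace ℝ X] (xs : ℕ → X) : Prop :=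
  ∀ f : StrongDual ℝ X, Tendsto (fun n => f (xs n)) atTop (𝓝 0)

/-- The annihilator `J^⊥` of a subspace `J` in the continuous dual. -/
def annih {Z : Type*} [NormedAddCommGroup Z] [NormedSpace ℝ Z] (J : Submodule ℝ Z) :
    Submodule ℝ (StrongDual ℝ Z) where
  carrier := {f | ∀ x ∈ J, f x = 0}
  add_mem' := by
    intro f g hf hg x hx
    simp [hf x hx, hg x hx]
  zero_mem' := by intro x hx; rfl
  smul_mem' := by
    intro c f hf x hx
    simp [hf x hx]

/-- `J` is an M-ideal in `Z`: there is a closed subspace `V` of the dual such that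
`Z* = J^⊥ ⊕₁ V` (algebraic direct sum with additive norm). -/
def IsMIdeal {Z : Type*} [NormedAddCommGroup Z] [NormedSpace ℝ Z] (J : Submodule ℝ Z) : Prop :=
  ∃ V : Submodule ℝ (StrongDual ℝ Z), IsClosed (V : Set (StrongDual ℝ Z)) ∧
    (∀ f : StrongDual ℝ Z, ∃ g ∈ annih J, ∃ h ∈ V, f = g + h) ∧
    annih J ⊓ V = ⊥ ∧
    ∀ g ∈ annih J, ∀ h ∈ V, ‖g + h‖ = ‖g‖ + ‖h‖

/-- Conditions (a)–(c) on a sequence of compact operators `K n` on `X`: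
(a) `K n x → x` for all `x`; (b) `(K n)* f → f` in norm for every `f ∈ X*`;
(c) `‖Id − 2 K n‖ → 1`. -/
def ABC {X : Type*} [NormedAddCommGroup X] [NormedSpace ℝ X] (K : ℕ → X →L[ℝ] X) : Prop :=
  (∀ n, IsCompactOperator (K n)) ∧
  (∀ x : X, Tendsto (fun n => (K n) x) atTop (𝓝 x)) ∧
  (∀ f : StrongDual ℝ X, Tendsto (fun n => f.comp (K n)) atTop (𝓝 f)) ∧
  Tendsto (fun n => ‖ContinuousLinearMap.id ℝ X - (2 : ℝ) • K n‖) atTop (𝓝 1)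

/-- Inequality (7) for `X` and exponent `p`. -/
def Ineq7 (X : Type*) [NormedAddCommGroup X] [NormedSpace ℝ X] (p : ℝ) : Prop :=
  ∀ (x : X) (xs : ℕ → X), WeaklyNull xs →
    limsup (fun n => (‖x‖ ^ p + ‖xs n‖ ^ p) ^ (1 / p)) atTop ≤
    limsup (fun n => ((‖x + xs n‖ ^ p + ‖x - xs n‖ ^ p) / 2) ^ (1 / p)) atTop

section aux

variable {X : Type*} [NormedAddCommGroup X] [NormedSpace ℝ X]

/-- A weakly null sequence is norm bounded. -/
lemma weaklyNull_bounded (xs : ℕ → X)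
    (h : ∀ f : StrongDual ℝ X, Tendsto (fun n => f (xs n)) atTop (𝓝 0)) :
    ∃ C : ℝ, ∀ n, ‖xs n‖ ≤ C := by
  have key : ∀ f : StrongDual ℝ X, ∃ C : ℝ,
      ∀ n, ‖(inclusionInDoubleDualLi ℝ (E := X) (xs n)) f‖ ≤ C := by
    intro f
    have hb : BddAbove (Set.range fun n => ‖f (xs n)‖) :=
      ((h f).norm.bddAbove_range)
    obtain ⟨C, hC⟩ := hb
    exact ⟨C, fun n => hC ⟨n, rfl⟩⟩
  obtain ⟨C', hC'⟩ := banach_steinhaus key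
  refine ⟨C', fun n => ?_⟩
  calc ‖xs n‖ = ‖inclusionInDoubleDualLi ℝ (E := X) (xs n)‖ :=
        ((inclusionInDoubleDualLi ℝ (E := X)).norm_map (xs n)).symm
    _ ≤ C' := hC' n

/-- A compact operator maps weakly null sequences to norm-null sequences. -/
lemma compact_weaklyNull_to_null (T : X →L[ℝ] X) (hT : IsCompactOperator T)
    (xs : ℕ → X) (hxs : ∀ f : StrongDual ℝ X, Tendsto (fun n => f (xs n)) atTop (𝓝 0)) :
    Tendsto (fun n => T (xs n)) atTop (𝓝 0) := by
  obtain ⟨C, hC⟩ := weaklyNull_bounded xs hxs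
  have hball : ∀ n, xs n ∈ Metric.closedBall (0 : X) C := by
    intro n; simpa [Metric.mem_closedBall, dist_eq_norm] using hC n
  have hScpt : IsCompact (closure (T '' Metric.closedBall (0 : X) C)) :=
    hT.isCompact_closure_image_of_bounded (𝕜₁ := ℝ) Metric.isBounded_closedBall
  apply tendsto_of_subseq_tendsto
  intro ns hns
  have hmem : ∀ k, T (xs (ns k)) ∈ closure (T '' Metric.closedBall (0 : X) C) :=
    fun k => subset_closure ⟨xs (ns k), hball _, rfl⟩
  obtain ⟨y, -, φ, hφ, hconv⟩ := hScpt.tendsto_subseq hmem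
  have hy : y = 0 := by
    apply NormedSpace.eq_zero_of_forall_dual_eq_zero ℝ
    intro f
    have h1 : Tendsto (fun n => f (T (xs n))) atTop (𝓝 0) := by
      have := hxs (f.comp T)
      simpa using this
    have h2 : Tendsto (fun k => f (T (xs (ns (φ k))))) atTop (𝓝 0) :=
      h1.comp (hns.comp hφ.tendsto_atTop)
    have h3 : Tendsto (fun k => f (T (xs (ns (φ k))))) atTop (𝓝 (f y)) :=
      (f.continuous.tendsto y).comp hconv
    exact tendsto_nhds_unique h3 h2
  exact ⟨φ, hy ▸ hconv⟩

end aux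

section main

variable {X : Type*} [NormedAddCommGroup X] [NormedSpace ℝ X] [CompleteSpace X]

/-- One-sided inequality. -/
lemma wM_le (K : ℕ → X →L[ℝ] X) (hcpt : ∀ n, IsCompactOperator (K n))
    (ha : ∀ x : X, Tendsto (fun n => (K n) x) atTop (𝓝 x))
    (hc : Tendsto (fun n => ‖ContinuousLinearMap.id ℝ X - (2 : ℝ) • K n‖) atTop (𝓝 1))
    (x : X) (xs : ℕ → X)
    (hxs : ∀ f : StrongDual ℝ X, Tendsto (fun n => f (xs n)) atTop (𝓝 0)) :
    limsup (fun n => ‖x - xs n‖) atTop ≤ limsup (fun n => ‖x + xs n‖) atTop := by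
  obtain ⟨C, hC⟩ := weaklyNull_bounded xs hxs
  set L := limsup (fun n => ‖x + xs n‖) atTop with hL
  have hbddp : IsBoundedUnder (· ≤ ·) atTop (fun n => ‖x + xs n‖) :=
    Filter.isBoundedUnder_of ⟨‖x‖ + C, fun n =>
      (norm_add_le _ _).trans (add_le_add le_rfl (hC n))⟩
  have hcobm : IsCoboundedUnder (· ≤ ·) atTop (fun n => ‖x - xs n‖) :=
    isCoboundedUnder_le_of_le atTop (x := 0) fun n => norm_nonneg _
  have key : ∀ ε : ℝ, 0 < ε →
      limsup (fun n => ‖x - xs n‖) atTop ≤ (1 + ε) * (L + ε) + 3 * ε := by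
    intro ε hε
    -- choose m
    have hm1 : ∀ᶠ m in atTop, ‖ContinuousLinearMap.id ℝ X - (2 : ℝ) • K m‖ < 1 + ε :=
      hc.eventually (eventually_lt_nhds (by linarith))
    have hm2 : ∀ᶠ m in atTop, ‖K m x - x‖ < ε / 2 := by
      have h0 : Tendsto (fun m => K m x - x) atTop (𝓝 0) := by
        simpa using (ha x).sub_const x
      have h0' : Tendsto (fun m => ‖K m x - x‖) atTop (𝓝 0) := by
        simpa using h0.norm
      exact h0'.eventually (eventually_lt_nhds (by linarith))
    obtain ⟨m, hmab⟩ := (hm1.and hm2).exists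
    obtain ⟨hma, hmb⟩ := hmab
    -- eventual bounds in n
    have hn1 : ∀ᶠ n in atTop, ‖x + xs n‖ < L + ε :=
      eventually_lt_of_limsup_lt (by linarith [hL]) hbddp
    have hn2 : ∀ᶠ n in atTop, ‖(K m) (xs n)‖ < ε := by
      have h0 := compact_weaklyNull_to_null (K m) (hcpt m) xs hxs
      have h0' : Tendsto (fun n => ‖(K m) (xs n)‖) atTop (𝓝 0) := by
        simpa using h0.norm
      exact h0'.eventually (eventually_lt_nhds hε)
    refine limsup_le_of_le hcobm ?_
    filter_upwards [hn1, hn2] with n h1 h2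
    have hid : x - xs n =
        -((ContinuousLinearMap.id ℝ X - (2 : ℝ) • K m) (x + xs n)
          + (2 : ℝ) • ((K m) x - x) + (2 : ℝ) • ((K m) (xs n))) := by
      simp only [ContinuousLinearMap.sub_apply, ContinuousLinearMap.coe_id',
        id_eq, ContinuousLinearMap.smul_apply, map_add, smul_sub, smul_add]
      module
    calc ‖x - xs n‖
        = ‖(ContinuousLinearMap.id ℝ X - (2 : ℝ) • K m) (x + xs n)
            + (2 : ℝ) • ((K m) x - x) + (2 : ℝ) • ((K m) (xs n))‖ := by
          rw [hid, norm_neg]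
      _ ≤ ‖(ContinuousLinearMap.id ℝ X - (2 : ℝ) • K m) (x + xs n)‖
            + ‖(2 : ℝ) • ((K m) x - x)‖ + ‖(2 : ℝ) • ((K m) (xs n))‖ :=
          norm_add₃_le
      _ ≤ ‖ContinuousLinearMap.id ℝ X - (2 : ℝ) • K m‖ * ‖x + xs n‖
            + 2 * ‖(K m) x - x‖ + 2 * ‖(K m) (xs n)‖ := by
          gcongr
          · exact (ContinuousLinearMap.le_opNorm _ _)
          · rw [norm_smul]; simp
          · rw [norm_smul]; simp
      _ ≤ (1 + ε) * (L + ε) + 3 * ε := by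
          have hmul : ‖ContinuousLinearMap.id ℝ X - (2 : ℝ) • K m‖ * ‖x + xs n‖
              ≤ (1 + ε) * (L + ε) :=
            mul_le_mul hma.le h1.le (norm_nonneg _) (by linarith)
          linarith [hmb.le, h2.le]
  -- let ε → 0
  have hcont : Tendsto (fun ε : ℝ => (1 + ε) * (L + ε) + 3 * ε) (𝓝[>] 0) (𝓝 L) := by
    have hca : ContinuousAt (fun ε : ℝ => (1 + ε) * (L + ε) + 3 * ε) 0 := by fun_prop
    have ht := hca.tendsto
    rw [show (1 + (0:ℝ)) * (L + 0) + 3 * 0 = L by ring] at ht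
    exact ht.mono_left nhdsWithin_le_nhds
  refine ge_of_tendsto hcont ?_
  filter_upwards [self_mem_nhdsWithin] with ε hε
  exact key ε hε

end main

/-- Property (wM): if `X` admits compact operators `K n` with `K n x → x` and
`‖Id − 2 K n‖ → 1`, then `limsup ‖x + xₙ‖ = limsup ‖x − xₙ‖` for weakly null `(xₙ)`. -/
theorem property_wM (X : Type*) [NormedAddCommGroup X] [NormedSpace ℝ X] [CompleteSpace X]
    (K : ℕ → X →L[ℝ] X) (hcpt : ∀ n, IsCompactOperator (K n))
    (ha : ∀ x : X, Tendsto (fun n => (K n) x) atTop (𝓝 x))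
    (hc : Tendsto (fun n => ‖ContinuousLinearMap.id ℝ X - (2 : ℝ) • K n‖) atTop (𝓝 1)) :
    ∀ (x : X) (xs : ℕ → X), WeaklyNull xs →
      limsup (fun n => ‖x + xs n‖) atTop = limsup (fun n => ‖x - xs n‖) atTop := by
  intro x xs hxs
  have hxs' : ∀ f : StrongDual ℝ X, Tendsto (fun n => f (xs n)) atTop (𝓝 0) := hxs
  have hneg : ∀ f : StrongDual ℝ X, Tendsto (fun n => f (-xs n)) atTop (𝓝 0) := by
    intro f
    simpa using (hxs' f).neg
  have h1 := wM_le K hcpt ha hc x xs hxs'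
  have h2 := wM_le K hcpt ha hc x (fun n => -xs n) hneg
  simp only [sub_neg_eq_add, ← sub_eq_add_neg] at h2
  exact le_antisymm h2 h1
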